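/- (Yao's principle, Monte Carlo version.) Let A and X be nonempty finite types, c : A × X → ℝ a nonnegative cost function, and mistake : A × X → Prop a decidable predicate. Let δ > 0. Suppose ρ is a probability mass function on A such that for every x ∈ X the ρ-probability of {a : mistake (a, x)} is at most δ, and let d be any probability mass function on X. Then there exists a ∈ A such that the d-probability of {x : mistake (a, x)} is at most 2δ, and the maximum over x ∈ X of the ρ-expectation of a' ↦ c (a', x) is at least (1/2)·(the d-expectation of x ↦ c (a, x)). -/

import Mathlib

/-- Yao's principle (Monte Carlo version). If a randomized algorithm (a PMF `ρ` over
deterministic algorithms `A`) errs with probability at most `δ` on every input, then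
for any input distribution `d` there is a deterministic algorithm `a` erring on at
most a `2δ` fraction of inputs (w.r.t. `d`) whose `d`-average cost is at most twice
the worst-case expected cost of the randomized algorithm. -/
theorem stmt5 {A X : Type*} [Fintype A] [Fintype X] [Nonempty A] [Nonempty X]
    (c : A × X → ℝ) (hc : ∀ p, 0 ≤ c p)
    (mistake : A × X → Prop) [DecidablePred mistake]
    (δ : ℝ) (hδ : 0 < δ)
    (ρ : PMF A) (d : PMF X)
    (hρ : ∀ x : X, (∑ a : A, if mistake (a, x) then (ρ a).toReal else 0) ≤ δ) :
    ∃ a : A,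
      (∑ x : X, if mistake (a, x) then (d x).toReal else 0) ≤ 2 * δ ∧
      (⨆ x : X, ∑ a' : A, (ρ a').toReal * c (a', x))
        ≥ (1 / 2) * ∑ x : X, (d x).toReal * c (a, x) := by
  classical
  set T := ⨆ x : X, ∑ a' : A, (ρ a').toReal * c (a', x) with hTdef
  have hρ1 : ∑ a : A, (ρ a).toReal = 1 := by
    have h1 : (∑ a : A, ρ a) = 1 := by rw [← ρ.tsum_coe, tsum_fintype]
    rw [← ENNReal.toReal_sum (fun a _ => ρ.apply_ne_top a), h1, ENNReal.toReal_one]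
  have hd1 : ∑ x : X, (d x).toReal = 1 := by
    have h1 : (∑ x : X, d x) = 1 := by rw [← d.tsum_coe, tsum_fintype]
    rw [← ENNReal.toReal_sum (fun x _ => d.apply_ne_top x), h1, ENNReal.toReal_one]
  set f : A → ℝ := fun a => ∑ x : X, if mistake (a, x) then (d x).toReal else 0 with hf
  set g : A → ℝ := fun a => ∑ x : X, (d x).toReal * c (a, x) with hg
  have hρnn : ∀ a : A, 0 ≤ (ρ a).toReal := fun a => ENNReal.toReal_nonneg
  have hdnn : ∀ x : X, 0 ≤ (d x).toReal := fun x => ENNReal.toReal_nonneg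
  have hf0 : ∀ a, 0 ≤ f a := fun a =>
    Finset.sum_nonneg fun x _ => by split <;> simp [hdnn x]
  have hg0 : ∀ a, 0 ≤ g a := fun a =>
    Finset.sum_nonneg fun x _ => mul_nonneg (hdnn x) (hc _)
  -- expected error
  have hEf : ∑ a : A, (ρ a).toReal * f a ≤ δ := by
    have swap : ∑ a : A, (ρ a).toReal * f a
        = ∑ x : X, (d x).toReal * ∑ a : A, (if mistake (a, x) then (ρ a).toReal else 0) := by
      simp only [hf, Finset.mul_sum]
      rw [Finset.sum_comm]
      congr 1; ext x; congr 1; ext a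
      by_cases h : mistake (a, x) <;> simp [h, mul_comm]
    rw [swap]
    calc ∑ x : X, (d x).toReal * ∑ a : A, (if mistake (a, x) then (ρ a).toReal else 0)
        ≤ ∑ x : X, (d x).toReal * δ :=
          Finset.sum_le_sum fun x _ => mul_le_mul_of_nonneg_left (hρ x) (hdnn x)
      _ = δ := by rw [← Finset.sum_mul, hd1, one_mul]
  -- T bounds
  have hgT : ∀ x : X, ∑ a' : A, (ρ a').toReal * c (a', x) ≤ T :=
    fun x => le_ciSup (f := fun x : X => ∑ a' : A, (ρ a').toReal * c (a', x))
      (Set.Finite.bddAbove (Set.finite_range _)) x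
  have hT0 : 0 ≤ T := le_trans
    (Finset.sum_nonneg fun a _ => mul_nonneg (hρnn a) (hc _)) (hgT (Classical.arbitrary X))
  have hEg : ∑ a : A, (ρ a).toReal * g a ≤ T := by
    have swap : ∑ a : A, (ρ a).toReal * g a
        = ∑ x : X, (d x).toReal * ∑ a : A, (ρ a).toReal * c (a, x) := by
      simp only [hg, Finset.mul_sum]
      rw [Finset.sum_comm]
      congr 1; ext x; congr 1; ext a; ring
    rw [swap]
    calc ∑ x : X, (d x).toReal * ∑ a : A, (ρ a).toReal * c (a, x)
        ≤ ∑ x : X, (d x).toReal * T :=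
          Finset.sum_le_sum fun x _ => mul_le_mul_of_nonneg_left (hgT x) (hdnn x)
      _ = T := by rw [← Finset.sum_mul, hd1, one_mul]
  -- existence of a good a in the support
  have exists_le : ∀ (h : A → ℝ) (B : ℝ), (∑ a : A, (ρ a).toReal * h a) ≤ B →
      ∃ a : A, 0 < (ρ a).toReal ∧ h a ≤ B := by
    intro h B hB
    by_contra hcon
    push_neg at hcon
    obtain ⟨a0, ha0⟩ : ∃ a0 : A, 0 < (ρ a0).toReal := by
      by_contra hall
      push_neg at hall
      have : ∑ a : A, (ρ a).toReal = 0 :=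
        Finset.sum_eq_zero fun a _ => le_antisymm (hall a) (hρnn a)
      rw [hρ1] at this; norm_num at this
    have hlt : ∑ a : A, (ρ a).toReal * B < ∑ a : A, (ρ a).toReal * h a := by
      apply Finset.sum_lt_sum
      · intro a _
        rcases lt_or_eq_of_le (hρnn a) with hpos | hz
        · exact mul_le_mul_of_nonneg_left (le_of_lt (hcon a hpos)) (le_of_lt hpos)
        · rw [← hz]; simp
      · exact ⟨a0, Finset.mem_univ a0,
          mul_lt_mul_of_pos_left (hcon a0 ha0) ha0⟩
    rw [← Finset.sum_mul, hρ1, one_mul] at hlt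
    exact absurd hB (not_le_of_gt hlt)
  rcases eq_or_lt_of_le hT0 with hT | hT
  · -- T = 0: every c(a,x) with ρ a > 0 vanishes
    obtain ⟨a, hapos, haf⟩ := exists_le f δ hEf
    refine ⟨a, le_trans haf (by linarith), ?_⟩
    have hgz : g a = 0 := by
      apply le_antisymm _ (hg0 a)
      apply Finset.sum_nonpos
      intro x _
      have h1 : ∑ a' : A, (ρ a').toReal * c (a', x) ≤ 0 := by rw [hT]; exact hgT x
      have h2 : (ρ a).toReal * c (a, x) ≤ ∑ a' : A, (ρ a').toReal * c (a', x) :=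
        Finset.single_le_sum (f := fun a' => (ρ a').toReal * c (a', x))
          (fun a' _ => mul_nonneg (hρnn a') (hc _)) (Finset.mem_univ a)
      have hcz : c (a, x) ≤ 0 := by nlinarith
      nlinarith [hdnn x]
    show (1 : ℝ) / 2 * g a ≤ T
    rw [hgz]
    linarith
  · -- T > 0
    have hsum : ∑ a : A, (ρ a).toReal * (f a / (2 * δ) + g a / (2 * T)) ≤ 1 := by
      have heq : ∑ a : A, (ρ a).toReal * (f a / (2 * δ) + g a / (2 * T))
          = (∑ a : A, (ρ a).toReal * f a) / (2 * δ)
            + (∑ a : A, (ρ a).toReal * g a) / (2 * T) := by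
        rw [Finset.sum_div, Finset.sum_div, ← Finset.sum_add_distrib]
        refine Finset.sum_congr rfl fun a _ => by ring
      rw [heq]
      have h1 : (∑ a : A, (ρ a).toReal * f a) / (2 * δ) ≤ 1 / 2 := by
        rw [div_le_div_iff₀ (by linarith) (by norm_num)]
        linarith
      have h2 : (∑ a : A, (ρ a).toReal * g a) / (2 * T) ≤ 1 / 2 := by
        rw [div_le_div_iff₀ (by linarith) (by norm_num)]
        linarith
      linarith
    obtain ⟨a, hapos, hab⟩ := exists_le (fun a => f a / (2 * δ) + g a / (2 * T)) 1 hsum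
    have hab' : f a / (2 * δ) + g a / (2 * T) ≤ 1 := hab
    refine ⟨a, ?_, ?_⟩
    · have h1 : f a / (2 * δ) ≤ 1 := by
        have := div_nonneg (hg0 a) (by linarith : (0:ℝ) ≤ 2 * T)
        linarith
      rw [div_le_one (by linarith)] at h1
      linarith
    · have h2 : g a / (2 * T) ≤ 1 := by
        have := div_nonneg (hf0 a) (by linarith : (0:ℝ) ≤ 2 * δ)
        linarith
      rw [div_le_one (by linarith)] at h2
      show (1 : ℝ) / 2 * g a ≤ T
      linarith
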